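/- Cassini identity for Horadam quaternions: for every natural number n ≥ 1, Gₙ₋₁·Gₙ₊₁ − Gₙ² = A·B·(αβ)ⁿ⁻¹·(β·(α̲·β̲) − α·(β̲·α̲))/(α − β), where α̲·β̲ and β̲·α̲ are quaternion products (which need not be equal). -/

import Mathlib

open Quaternion

/-- The Horadam sequence `w(a,b;p,q)`: `w₀ = a`, `w₁ = b`,
`wₙ = p·wₙ₋₁ + q·wₙ₋₂` for `n ≥ 2`. -/
def horadam (a b p q : ℝ) : ℕ → ℝ
  | 0 => a
  | 1 => b
  | n + 2 => p * horadam a b p q (n + 1) + q * horadam a b p q n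

/-- The `n`-th Horadam quaternion `Gₙ = wₙ + wₙ₊₁·i + wₙ₊₂·j + wₙ₊₃·k`. -/
def horadamQ (a b p q : ℝ) (n : ℕ) : ℍ[ℝ] :=
  ⟨horadam a b p q n, horadam a b p q (n + 1), horadam a b p q (n + 2), horadam a b p q (n + 3)⟩

lemma binet (a b p q α β A B : ℝ) (hα2 : α ^ 2 = p * α + q) (hβ2 : β ^ 2 = p * β + q)
    (hA : A = b - a * β) (hB : B = b - a * α) (hne : α - β ≠ 0) :
    ∀ n, horadam a b p q n = (A * α ^ n - B * β ^ n) / (α - β)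
  | 0 => by rw [horadam, hA, hB]; field_simp; ring
  | 1 => by rw [horadam, hA, hB]; field_simp; ring
  | n + 2 => by
    rw [show horadam a b p q (n+2) = p * horadam a b p q (n+1) + q * horadam a b p q n from rfl,
      binet a b p q α β A B hα2 hβ2 hA hB hne (n+1), binet a b p q α β A B hα2 hβ2 hA hB hne n]
    field_simp
    linear_combination (B * β ^ n) * hβ2 - (A * α ^ n) * hα2

/-- Cassini identity for Horadam quaternions: for `n ≥ 1`,
`Gₙ₋₁·Gₙ₊₁ − Gₙ² = A·B·(αβ)ⁿ⁻¹·(β·(α̲·β̲) − α·(β̲·α̲))/(α − β)`. -/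
theorem horadamQ_cassini (a b p q : ℝ) (hpq : p ^ 2 + 4 * q > 0)
    (α β A B : ℝ)
    (hα : α = (p + Real.sqrt (p ^ 2 + 4 * q)) / 2)
    (hβ : β = (p - Real.sqrt (p ^ 2 + 4 * q)) / 2)
    (hA : A = b - a * β) (hB : B = b - a * α)
    (αq βq : ℍ[ℝ])
    (hαq : αq = ⟨1, α, α ^ 2, α ^ 3⟩) (hβq : βq = ⟨1, β, β ^ 2, β ^ 3⟩) :
    ∀ n : ℕ, 1 ≤ n →
      horadamQ a b p q (n - 1) * horadamQ a b p q (n + 1) - (horadamQ a b p q n) ^ 2 =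
        ((A * B * (α * β) ^ (n - 1)) • (β • (αq * βq) - α • (βq * αq))) /
          ((α - β : ℝ) : ℍ[ℝ]) := by
  intro n hn
  obtain ⟨m, rfl⟩ : ∃ m, n = m + 1 := ⟨n - 1, by omega⟩
  have hs : Real.sqrt (p ^ 2 + 4 * q) ^ 2 = p ^ 2 + 4 * q := Real.sq_sqrt hpq.le
  have hsub : α - β = Real.sqrt (p ^ 2 + 4 * q) := by rw [hα, hβ]; ring
  have hne : α - β ≠ 0 := by rw [hsub]; exact (Real.sqrt_pos.mpr hpq).ne'
  have hα2 : α ^ 2 = p * α + q := by rw [hα]; linear_combination hs / 4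
  have hβ2 : β ^ 2 = p * β + q := by rw [hβ]; linear_combination hs / 4
  have hw := binet a b p q α β A B hα2 hβ2 hA hB hne
  have hG : ∀ k : ℕ, (α - β) • horadamQ a b p q k = (A * α ^ k) • αq - (B * β ^ k) • βq := by
    intro k
    rw [horadamQ, hαq, hβq]; erw [QuaternionAlgebra.smul_mk, QuaternionAlgebra.smul_mk, QuaternionAlgebra.smul_mk, QuaternionAlgebra.mk_sub_mk]
    ext <;>
      simp only [horadamQ, hw, hαq, hβq, Quaternion.re_smul, Quaternion.imI_smul,
        Quaternion.imJ_smul, Quaternion.imK_smul, Quaternion.re_sub, Quaternion.imI_sub,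
        Quaternion.imJ_sub, Quaternion.imK_sub, QuaternionAlgebra.re_smul, QuaternionAlgebra.imI_smul,
        QuaternionAlgebra.imJ_smul, QuaternionAlgebra.imK_smul, QuaternionAlgebra.re_sub,
        QuaternionAlgebra.imI_sub, QuaternionAlgebra.imJ_sub, QuaternionAlgebra.imK_sub, smul_eq_mul] <;>
      field_simp <;> ring
  have hcne : ((α - β : ℝ) : ℍ[ℝ]) ≠ 0 := fun h => hne (Quaternion.coe_injective (by simpa using h))
  rw [eq_div_iff hcne, Quaternion.mul_coe_eq_smul]
  apply smul_right_injective ℍ[ℝ] hne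
  rw [sq, smul_sub]
  simp only [smul_sub]
  simp only [show ∀ x y : ℍ[ℝ], (α - β) • ((α - β) • (x * y)) =
      ((α - β) • x) * ((α - β) • y) from fun x y => by
        simp [smul_smul, smul_mul_assoc, mul_smul_comm], Nat.add_sub_cancel]
  rw [hG m, hG (m + 2), hG (m + 1)]
  simp only [sub_mul, mul_sub, smul_mul_assoc, mul_smul_comm, smul_smul, smul_sub]
  match_scalars <;> ring
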